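/- A vector η indexed by pairs (i|B) is a lattice point in the polyhedron J defined by the non-negativity constraints, the equality constraints Σ_{B⊆N\{j}} η(j|B)=1 for all j, and the cluster inequalities Σ_{i∈C} Σ_{D⊆N\C} η(i|D) ≥ 1 for all C ⊆ N with |C| ≥ 2, if and only if η = η_G for some acyclic directed graph G over N. -/

import Mathlib

/-- A vector `η` is a lattice point in the polyhedron `J` (non-negativity,
equality constraints and cluster inequalities) iff `η = η_G` for some acyclic
directed graph `G` over `N` (given by its parent map `P`). -/
theorem stmt_7 {V : Type*} [Fintype V] [DecidableEq V]
    (hN : 2 ≤ Fintype.card V)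
    (η : {p : V × Finset V // p.1 ∉ p.2} → ℝ) :
    ((∀ p, 0 ≤ η p) ∧
     (∀ j : V, (∑ p : {p : V × Finset V // p.1 ∉ p.2},
        if p.1.1 = j then η p else 0) = 1) ∧
     (∀ C : Finset V, 2 ≤ C.card →
        (1 : ℝ) ≤ ∑ p : {p : V × Finset V // p.1 ∉ p.2},
          if p.1.1 ∈ C ∧ p.1.2 ∩ C = ∅ then η p else 0) ∧
     (∀ p, ∃ n : ℤ, η p = n)) ↔
      ∃ P : V → Finset V, (∀ i, i ∉ P i) ∧
        (∀ v, ¬ Relation.TransGen (fun j i => j ∈ P i) v v) ∧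
        η = fun p => if p.1.2 = P p.1.1 then 1 else 0 := by
  classical
  constructor
  · rintro ⟨hpos, hsum, hclust, hint⟩
    -- Step 1: in each fiber over `j`, exactly one coordinate equals 1, rest 0.
    have key : ∀ j : V, ∃ B : Finset V, j ∉ B ∧
        ∀ p : {p : V × Finset V // p.1 ∉ p.2}, p.1.1 = j →
          η p = if p.1.2 = B then 1 else 0 := by
      intro j
      set f : {p : V × Finset V // p.1 ∉ p.2} → ℝ :=
        fun p => if p.1.1 = j then η p else 0 with hf
      have hf0 : ∀ p, 0 ≤ f p := by
        intro p; simp only [hf]; split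
        · exact hpos _
        · exact le_rfl
      have hsumj : (∑ p, f p) = 1 := hsum j
      have hex : ∃ p₀, f p₀ ≠ 0 := by
        by_contra h
        push_neg at h
        rw [Finset.sum_eq_zero (fun p _ => h p)] at hsumj
        norm_num at hsumj
      obtain ⟨p₀, hp₀⟩ := hex
      have hp₀j : p₀.1.1 = j := by
        by_contra h; simp only [hf, if_neg h] at hp₀; exact hp₀ rfl
      have hfp₀ : f p₀ = η p₀ := by simp [hf, hp₀j]
      have hηp₀ : η p₀ ≠ 0 := by rwa [hfp₀] at hp₀
      have h1le : (1 : ℝ) ≤ η p₀ := by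
        obtain ⟨n, hn⟩ := hint p₀
        have hn0 : 0 ≤ n := by exact_mod_cast hn ▸ hpos p₀
        have hnne : n ≠ 0 := by rintro rfl; simp [hn] at hηp₀
        have : 1 ≤ n := lt_of_le_of_ne hn0 (Ne.symm hnne)
        rw [hn]; exact_mod_cast this
      have hle1 : η p₀ ≤ 1 := by
        rw [← hfp₀, ← hsumj]
        exact Finset.single_le_sum (fun p _ => hf0 p) (Finset.mem_univ p₀)
      have hη1 : η p₀ = 1 := le_antisymm hle1 h1le
      have hzero : ∀ p, p ≠ p₀ → f p = 0 := by
        intro p hne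
        have hsub : ({p₀, p} : Finset _) ⊆ Finset.univ := Finset.subset_univ _
        have hpair : f p₀ + f p ≤ ∑ q, f q := by
          have := Finset.sum_le_sum_of_subset_of_nonneg hsub
            (fun q _ _ => hf0 q)
          rwa [Finset.sum_pair (Ne.symm hne)] at this
        rw [hsumj, hfp₀, hη1] at hpair
        have := hf0 p
        linarith
      refine ⟨p₀.1.2, hp₀j ▸ p₀.2, fun p hpj => ?_⟩
      by_cases hB : p.1.2 = p₀.1.2
      · have : p = p₀ := by
          apply Subtype.ext
          exact Prod.ext (hpj.trans hp₀j.symm) hB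
        rw [this, hη1, if_pos rfl]
      · have hne : p ≠ p₀ := fun h => hB (by rw [h])
        have := hzero p hne
        simp only [hf, if_pos hpj] at this
        rw [this, if_neg hB]
    choose P hP1 hP2 using key
    have hη : η = fun p => if p.1.2 = P p.1.1 then 1 else 0 := by
      funext p; exact hP2 p.1.1 p rfl
    refine ⟨P, hP1, ?_, hη⟩
    intro v hv
    set r : V → V → Prop := fun j i => j ∈ P i with hr
    set C : Finset V := Finset.univ.filter
      (fun u => Relation.TransGen r v u ∧ Relation.TransGen r u v) with hC
    have hmemC : ∀ u, u ∈ C ↔ Relation.TransGen r v u ∧ Relation.TransGen r u v := by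
      intro u; simp [hC]
    have hvC : v ∈ C := (hmemC v).mpr ⟨hv, hv⟩
    -- every element of C has a parent in C
    have hclosed : ∀ i ∈ C, ∃ j ∈ C, j ∈ P i := by
      intro i hi
      obtain ⟨hvi, hiv⟩ := (hmemC i).mp hi
      obtain ⟨j, hvj, hji⟩ := Relation.TransGen.tail'_iff.mp hvi
      have hjv : Relation.TransGen r j v := (Relation.TransGen.single hji).trans hiv
      have hvj' : Relation.TransGen r v j := by
        rcases Relation.reflTransGen_iff_eq_or_transGen.mp hvj with h | h
        · exact h ▸ hv
        · exact h
      exact ⟨j, (hmemC j).mpr ⟨hvj', hjv⟩, hji⟩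
    -- C has at least two elements
    have hcard : 2 ≤ C.card := by
      obtain ⟨j, hvj, hjv⟩ := Relation.TransGen.tail'_iff.mp hv
      have hjC : j ∈ C := by
        refine (hmemC j).mpr ⟨?_, (Relation.TransGen.single hjv).trans hv⟩
        rcases Relation.reflTransGen_iff_eq_or_transGen.mp hvj with h | h
        · exact h ▸ hv
        · exact h
      have hne : j ≠ v := fun h => hP1 v (h ▸ hjv)
      calc 2 = ({v, j} : Finset V).card := by rw [Finset.card_pair (Ne.symm hne)]
        _ ≤ C.card := Finset.card_le_card (by
            intro x hx
            rcases Finset.mem_insert.mp hx with rfl | hx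
            · exact hvC
            · exact Finset.mem_singleton.mp hx ▸ hjC)
    have := hclust C hcard
    have hzero : (∑ p : {p : V × Finset V // p.1 ∉ p.2},
        if p.1.1 ∈ C ∧ p.1.2 ∩ C = ∅ then η p else 0) = 0 := by
      apply Finset.sum_eq_zero
      intro p _
      split
      · next h =>
        obtain ⟨hpC, hpdisj⟩ := h
        rw [hη]
        simp only
        rw [if_neg]
        intro hPB
        obtain ⟨j, hjC, hjP⟩ := hclosed p.1.1 hpC
        have : j ∈ p.1.2 ∩ C := Finset.mem_inter.mpr ⟨hPB ▸ hjP, hjC⟩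
        rw [hpdisj] at this
        exact absurd this (Finset.notMem_empty j)
      · rfl
    rw [hzero] at this
    norm_num at this
  · rintro ⟨P, hPi, hacyc, rfl⟩
    set r : V → V → Prop := fun j i => j ∈ P i with hr
    refine ⟨?_, ?_, ?_, ?_⟩
    · intro p; simp only; split <;> norm_num
    · intro j
      have := Fintype.sum_eq_single (f := fun p : {p : V × Finset V // p.1 ∉ p.2} =>
          if p.1.1 = j then (if p.1.2 = P p.1.1 then (1 : ℝ) else 0) else 0)
        ⟨(j, P j), hPi j⟩ (by
          intro b hb
          split
          · next h1 =>
            split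
            · next h2 =>
              exact absurd (Subtype.ext (Prod.ext h1 (h1 ▸ h2))) hb
            · rfl
          · rfl)
      rw [this]
      simp
    · intro C hC
      haveI : IsTrans V (Relation.TransGen r) := ⟨fun _ _ _ => Relation.TransGen.trans⟩
      haveI : IsIrrefl V (Relation.TransGen r) := ⟨hacyc⟩
      have hwf : WellFounded (Relation.TransGen r) :=
        Finite.wellFounded_of_trans_of_irrefl _
      have hCne : (↑C : Set V).Nonempty := by
        have : C.Nonempty := Finset.card_pos.mp (by omega)
        exact ⟨this.choose, this.choose_spec⟩
      obtain ⟨i, hiC, hmin⟩ := hwf.has_min (↑C) hCne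
      have hiC' : i ∈ C := hiC
      have hdisj : P i ∩ C = ∅ := by
        by_contra h
        obtain ⟨j, hj⟩ := Finset.nonempty_iff_ne_empty.mpr h
        obtain ⟨hjP, hjC⟩ := Finset.mem_inter.mp hj
        exact hmin j hjC (Relation.TransGen.single hjP)
      have hterm : (fun p : {p : V × Finset V // p.1 ∉ p.2} =>
          if p.1.1 ∈ C ∧ p.1.2 ∩ C = ∅ then (if p.1.2 = P p.1.1 then (1 : ℝ) else 0) else 0)
          ⟨(i, P i), hPi i⟩ = 1 := by
        simp [hiC', hdisj]
      calc (1 : ℝ) = _ := hterm.symm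
        _ ≤ _ := Finset.single_le_sum (f := fun p : {p : V × Finset V // p.1 ∉ p.2} =>
            if p.1.1 ∈ C ∧ p.1.2 ∩ C = ∅ then (if p.1.2 = P p.1.1 then (1 : ℝ) else 0) else 0)
            (fun p _ => by
              split
              · split <;> norm_num
              · exact le_rfl)
            (Finset.mem_univ (⟨(i, P i), hPi i⟩ : {p : V × Finset V // p.1 ∉ p.2}))
    · intro p
      refine ⟨if p.1.2 = P p.1.1 then 1 else 0, ?_⟩
      simp only; split <;> simp
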